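/- Let m be an even positive integer and k̂ > 0. The function t ↦ exp(k̂·(log t)^m) is convex on (0, ∞) if and only if k̂ ≥ 1/m^(m+1). In particular, t ↦ exp(k̂·(log t)²) is convex on (0, ∞) if and only if k̂ ≥ 1/8. -/

import Mathlib

open Real Set Filter

lemma aux_deriv_nonneg_of_monotoneOn' {g : ℝ → ℝ} {c x : ℝ}
    (hg : MonotoneOn g (Set.Ioi 0)) (hx : 0 < x) (hd : HasDerivAt g c x) : 0 ≤ c := by
  have h1 : HasDerivWithinAt g c (Set.Ioi x) x := hd.hasDerivWithinAt
  rw [hasDerivWithinAt_iff_tendsto_slope] at h1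
  rw [Set.diff_singleton_eq_self (by simp : x ∉ Set.Ioi x)] at h1
  refine ge_of_tendsto h1 ?_
  filter_upwards [self_mem_nhdsWithin] with y hy
  have hxy : x < y := hy
  have hmono : g x ≤ g y := hg hx (hx.trans hxy) hxy.le
  rw [slope_def_field]
  exact div_nonneg (by linarith) (by linarith)

lemma aux_hasDerivAt_F' (j : ℕ) (k : ℝ) {t : ℝ} (ht : 0 < t) :
    HasDerivAt (fun t : ℝ => Real.exp (k * Real.log t ^ (j+2)))
      (Real.exp (k * Real.log t ^ (j+2)) * (k * (j+2) * Real.log t ^ (j+1)) / t) t := by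
  have hl : HasDerivAt Real.log t⁻¹ t := Real.hasDerivAt_log ht.ne'
  have hp : HasDerivAt (fun t : ℝ => k * Real.log t ^ (j+2))
      (k * ((j+2 : ℕ) * Real.log t ^ (j+1) * t⁻¹)) t := (hl.pow (j+2)).const_mul k
  have h := hp.exp
  convert h using 1
  push_cast
  field_simp

lemma aux_hasDerivAt_D1' (j : ℕ) (k : ℝ) {t : ℝ} (ht : 0 < t) :
    HasDerivAt (fun t : ℝ => Real.exp (k * Real.log t ^ (j+2)) * (k * (j+2) * Real.log t ^ (j+1)) / t)
      (Real.exp (k * Real.log t ^ (j+2)) * (k * (j+2)) / t^2 *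
        (k * (j+2) * Real.log t ^ (2*j+2) + (j+1) * Real.log t ^ j - Real.log t ^ (j+1))) t := by
  have hl : HasDerivAt Real.log t⁻¹ t := Real.hasDerivAt_log ht.ne'
  have hA := aux_hasDerivAt_F' j k ht
  have hB : HasDerivAt (fun t : ℝ => k * ((j:ℝ)+2) * Real.log t ^ (j+1))
      (k * ((j:ℝ)+2) * ((j+1 : ℕ) * Real.log t ^ j * t⁻¹)) t := (hl.pow (j+1)).const_mul _
  have hAB := hA.mul hB
  have h := hAB.div (hasDerivAt_id t) ht.ne'
  convert h using 1
  · rfl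
  · rfl
  · rfl
  push_cast
  simp only [id, Pi.mul_apply]
  field_simp
  ring


lemma aux_key' (j : ℕ) (hje : Even j) (k : ℝ) :
    (∀ u : ℝ, 0 ≤ k * (j+2) * u ^ (2*j+2) + (j+1) * u ^ j - u ^ (j+1)) ↔
      1 / ((j:ℝ)+2) ^ (j+3) ≤ k := by
  have h2 : (0:ℝ) < (j:ℝ)+2 := by positivity
  constructor
  · intro h
    have hp : (0:ℝ) < ((j:ℝ)+2)^j := by positivity
    have hu := h ((j:ℝ)+2)
    have e1 : ((j:ℝ)+2) * ((j:ℝ)+2)^(2*j+2) = ((j:ℝ)+2)^(j+3) * ((j:ℝ)+2)^j := by ring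
    have e2 : ((j:ℝ)+2)^(j+1) = ((j:ℝ)+2) * ((j:ℝ)+2)^j := by ring
    have e0 : k * ((j:ℝ)+2) * (((j:ℝ))+2) ^ (2*j+2) = k * ((((j:ℝ))+2)^(j+3) * (((j:ℝ))+2)^j) := by
      ring
    have e3 : ((j:ℝ)+2)^j ≤ k * (((j:ℝ)+2)^(j+3) * ((j:ℝ)+2)^j) := by linarith
    rw [div_le_iff₀ (by positivity)]
    have := le_of_mul_le_mul_right (by linarith : (1:ℝ) * ((j:ℝ)+2)^j ≤ (k * ((j:ℝ)+2)^(j+3)) * ((j:ℝ)+2)^j) hp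
    linarith
  · intro hk u
    have hk0 : (0:ℝ) ≤ k := le_trans (by positivity) hk
    rcases le_or_gt u 0 with hu | hu
    · have e1 : (0:ℝ) ≤ u ^ (2*j+2) := Even.pow_nonneg ⟨j+1, by ring⟩ u
      have e2 : (0:ℝ) ≤ u ^ j := hje.pow_nonneg u
      have e3 : u ^ (j+1) ≤ 0 := by
        rw [pow_succ]; exact mul_nonpos_of_nonneg_of_nonpos e2 hu
      have t1 : (0:ℝ) ≤ k * ((j:ℝ)+2) * u^(2*j+2) := mul_nonneg (mul_nonneg hk0 h2.le) e1
      have t2 : (0:ℝ) ≤ ((j:ℝ)+1) * u^j := mul_nonneg (by positivity) e2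
      linarith
    · have hb : 1 + ((j:ℝ)+2) * (u/((j:ℝ)+2) - 1) ≤ (u/((j:ℝ)+2)) ^ (j+2) := by
        have := one_add_mul_le_pow (a := u/((j:ℝ)+2) - 1)
          (by nlinarith [div_nonneg hu.le h2.le]) (j+2)
        simpa using this
      have heq : ((j:ℝ)+2) * (u/((j:ℝ)+2) - 1) = u - ((j:ℝ)+2) := by field_simp
      have key : u - ((j:ℝ)+1) ≤ (u/((j:ℝ)+2))^(j+2) := by linarith
      have c2 : (1/((j:ℝ)+2)^(j+3)) * (((j:ℝ)+2) * u^(j+2)) = (u/((j:ℝ)+2))^(j+2) := by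
        rw [div_pow]; field_simp; ring
      have hup : (0:ℝ) < u^(j+2) := pow_pos hu _
      have c3 : (1/((j:ℝ)+2)^(j+3)) * (((j:ℝ)+2) * u^(j+2)) ≤ k * (((j:ℝ)+2) * u^(j+2)) :=
        mul_le_mul_of_nonneg_right hk (by positivity)
      have hmain : (0:ℝ) ≤ k * ((j:ℝ)+2) * u^(j+2) + ((j:ℝ)+1) - u := by nlinarith
      have f1 : u^(2*j+2) = u^j * u^(j+2) := by ring
      have f2 : u^(j+1) = u^j * u := pow_succ u j
      have hujnn : (0:ℝ) ≤ u^j := (pow_pos hu j).le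
      nlinarith [mul_nonneg hujnn hmain]

lemma aux_main (j : ℕ) (hje : Even j) (k : ℝ) (hk0 : 0 < k) :
    ConvexOn ℝ (Set.Ioi (0:ℝ)) (fun t : ℝ => Real.exp (k * Real.log t ^ (j+2))) ↔
      1 / ((j:ℝ)+2) ^ (j+3) ≤ k := by
  constructor
  · intro hc
    rw [← aux_key' j hje k]
    intro u
    have hmono : MonotoneOn (deriv (fun t : ℝ => Real.exp (k * Real.log t ^ (j+2)))) (Set.Ioi 0) :=
      hc.monotoneOn_deriv (fun x hx => (aux_hasDerivAt_F' j k hx).differentiableAt)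
    set x := Real.exp u with hxdef
    have hx : 0 < x := Real.exp_pos u
    have heq : deriv (fun t : ℝ => Real.exp (k * Real.log t ^ (j+2)))
        =ᶠ[nhds x] (fun t : ℝ => Real.exp (k * Real.log t ^ (j+2)) * (k * (j+2) * Real.log t ^ (j+1)) / t) := by
      filter_upwards [Ioi_mem_nhds hx] with y hy using (aux_hasDerivAt_F' j k hy).deriv
    have hD2 : HasDerivAt (deriv (fun t : ℝ => Real.exp (k * Real.log t ^ (j+2))))
        (Real.exp (k * Real.log x ^ (j+2)) * (k * (j+2)) / x^2 *
          (k * (j+2) * Real.log x ^ (2*j+2) + (j+1) * Real.log x ^ j - Real.log x ^ (j+1))) x :=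
      (aux_hasDerivAt_D1' j k hx).congr_of_eventuallyEq heq
    have h0 := aux_deriv_nonneg_of_monotoneOn' hmono hx hD2
    rw [Real.log_exp] at h0
    have hpre : (0:ℝ) < Real.exp (k * u ^ (j+2)) * (k * ((j:ℝ)+2)) / x^2 := by positivity
    nlinarith [h0, hpre]
  · intro hk
    refine convexOn_of_hasDerivWithinAt2_nonneg (convex_Ioi 0)
      (f' := fun t : ℝ => Real.exp (k * Real.log t ^ (j+2)) * (k * (j+2) * Real.log t ^ (j+1)) / t)
      (f'' := fun t : ℝ => Real.exp (k * Real.log t ^ (j+2)) * (k * (j+2)) / t^2 *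
        (k * (j+2) * Real.log t ^ (2*j+2) + (j+1) * Real.log t ^ j - Real.log t ^ (j+1)))
      ?_ ?_ ?_ ?_
    · exact fun t ht => ((aux_hasDerivAt_F' j k ht).continuousAt).continuousWithinAt
    · intro x hx
      rw [interior_Ioi] at hx
      exact (aux_hasDerivAt_F' j k hx).hasDerivWithinAt
    · intro x hx
      rw [interior_Ioi] at hx
      exact (aux_hasDerivAt_D1' j k hx).hasDerivWithinAt
    · intro x hx
      rw [interior_Ioi] at hx
      have hphi := (aux_key' j hje k).mpr hk (Real.log x)
      have hpre : (0:ℝ) ≤ Real.exp (k * Real.log x ^ (j+2)) * (k * ((j:ℝ)+2)) / x^2 := by positivity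
      exact mul_nonneg hpre hphi

/-- For an even positive integer `m` and `k̂ > 0`, the function
`t ↦ exp(k̂·(log t)^m)` is convex on `(0, ∞)` if and only if `k̂ ≥ 1/m^(m+1)`.
In particular, `t ↦ exp(k̂·(log t)²)` is convex on `(0, ∞)` iff `k̂ ≥ 1/8`. -/
theorem exp_log_pow_convex_iff (m : ℕ) (hm : 0 < m) (hme : Even m)
    (khat : ℝ) (hkhat : 0 < khat) :
    (ConvexOn ℝ (Set.Ioi (0 : ℝ)) (fun t : ℝ => Real.exp (khat * Real.log t ^ m)) ↔
      1 / (m : ℝ) ^ (m + 1) ≤ khat) ∧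
    (ConvexOn ℝ (Set.Ioi (0 : ℝ)) (fun t : ℝ => Real.exp (khat * Real.log t ^ 2)) ↔
      1 / 8 ≤ khat) := by
  constructor
  · obtain ⟨i, rfl⟩ : ∃ i, m = i + 2 := by
      obtain ⟨r, hr⟩ := hme
      exact ⟨m - 2, by omega⟩
    have hje : Even i := by
      obtain ⟨r, hr⟩ := hme
      exact ⟨r - 1, by omega⟩
    have h := aux_main i hje khat hkhat
    have hc : ((i + 2 : ℕ) : ℝ) = (i : ℝ) + 2 := by push_cast; ring
    rw [hc]
    exact h
  · have h := aux_main 0 Even.zero khat hkhat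
    norm_num at h
    exact h
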